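/- Let J : ℝⁿ × ℝ → ℝ be continuously differentiable in its first argument with gradient ∇ₐJ, and let μ > 0 be such that for every t and every a, b ∈ ℝⁿ, ⟨∇ₐJ(a,t) − ∇ₐJ(b,t), a − b⟩ ≥ μ ‖a − b‖² (J(·,t) is μ-strongly convex). Let a⋆ : ℝ → ℝⁿ be differentiable with ∇ₐJ(a⋆(t), t) = 0 for all t (a⋆(t) is the minimizer of J(·,t)) and ‖d a⋆(t)/dt‖ ≤ M for all t and some M > 0. Let c > 0 and let a : [0, ∞) → ℝⁿ satisfy a′(t) = −c ∇ₐJ(a(t), t). Then for all t ≥ 0, ‖a(t) − a⋆(t)‖ ≤ e^{−cμt} ‖a(0) − a⋆(0)‖ + M/(cμ). In particular, for any ε > 0, choosing the gain c large enough guarantees that a(t) eventually remains within ε of the time-varying minimizer a⋆(t). -/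

import Mathlib

open scoped RealInnerProductSpace

/-- Quantitative tracking bound for the gradient flow of a time-varying strongly convex
objective whose minimizer moves with bounded rate: the distance to the moving minimizer
decays exponentially up to the offset `M / (c * μ)`. -/
theorem gradient_flow_tracks_moving_minimizer
    (n : ℕ) (J : EuclideanSpace ℝ (Fin n) → ℝ → ℝ)
    (hJ : ∀ t : ℝ, ContDiff ℝ 1 (fun a => J a t))
    (μ : ℝ) (hμ : 0 < μ)
    (hsc : ∀ (t : ℝ) (a b : EuclideanSpace ℝ (Fin n)),
      μ * ‖a - b‖ ^ 2 ≤ ⟪gradient (fun x => J x t) a - gradient (fun x => J x t) b, a - b⟫)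
    (astar : ℝ → EuclideanSpace ℝ (Fin n))
    (hastar_diff : Differentiable ℝ astar)
    (hcrit : ∀ t : ℝ, gradient (fun x => J x t) (astar t) = 0)
    (M : ℝ) (hM : 0 < M) (hrate : ∀ t : ℝ, ‖deriv astar t‖ ≤ M)
    (c : ℝ) (hc : 0 < c)
    (a : ℝ → EuclideanSpace ℝ (Fin n))
    (ha : ∀ t ≥ (0:ℝ), HasDerivAt a (-c • gradient (fun x => J x t) (a t)) t) :
    ∀ t ≥ (0:ℝ),
      ‖a t - astar t‖ ≤ Real.exp (-(c * μ * t)) * ‖a 0 - astar 0‖ + M / (c * μ) := by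
  classical
  intro T hT
  set F : ℝ → EuclideanSpace ℝ (Fin n) := fun s => a s - astar s with hF
  set F' : ℝ → EuclideanSpace ℝ (Fin n) :=
    fun s => -c • gradient (fun x => J x s) (a s) - deriv astar s with hF'
  have hFd : ∀ x ≥ (0:ℝ), HasDerivAt F (F' x) x := fun x hx =>
    (ha x hx).sub (hastar_diff x).hasDerivAt
  set g : ℝ → ℝ := fun s => ‖F s‖ with hg
  set D : ℝ → ℝ := fun s => if F s = 0 then M else ⟪F' s, F s⟫ / ‖F s‖ with hD
  have hcμ : 0 < c * μ := mul_pos hc hμ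
  -- key inner-product inequality
  have hinner : ∀ x : ℝ, ⟪F' x, F x⟫ ≤ -(c * μ) * ‖F x‖ ^ 2 + M * ‖F x‖ := by
    intro x
    have h1 : ⟪F' x, F x⟫ =
        -c * ⟪gradient (fun y => J y x) (a x) - gradient (fun y => J y x) (astar x), F x⟫
          + ⟪-deriv astar x, F x⟫ := by
      simp only [hF', hcrit x, sub_zero]
      rw [sub_eq_add_neg, inner_add_left, inner_smul_left]
      norm_num
    have h2 : μ * ‖F x‖ ^ 2 ≤
        ⟪gradient (fun y => J y x) (a x) - gradient (fun y => J y x) (astar x), F x⟫ :=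
      hsc x (a x) (astar x)
    have h3 : ⟪-deriv astar x, F x⟫ ≤ M * ‖F x‖ := by
      calc ⟪-deriv astar x, F x⟫ ≤ ‖-deriv astar x‖ * ‖F x‖ := real_inner_le_norm _ _
        _ ≤ M * ‖F x‖ := by
            have := hrate x
            rw [norm_neg]
            exact mul_le_mul_of_nonneg_right this (norm_nonneg _)
    nlinarith [h2, mul_le_mul_of_nonneg_left h2 hc.le]
  -- the Dini-type slope bound
  have hslope : ∀ x ∈ Set.Ico (0:ℝ) T, ∀ r, D x < r →
      ∃ᶠ z in nhdsWithin x (Set.Ioi x), (z - x)⁻¹ * (g z - g x) < r := by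
    intro x hx r hr
    have hx0 : (0:ℝ) ≤ x := hx.1
    have hFx := hFd x hx0
    by_cases h0 : F x = 0
    · -- here a x = astar x, so the gradient term vanishes and ‖F' x‖ ≤ M
      have hax : a x = astar x := by rwa [hF, sub_eq_zero] at h0
      have hF'x : F' x = -deriv astar x := by
        simp [hF', hax, hcrit x]
      have hrM : M < r := by simpa [hD, h0] using hr
      have htends : Filter.Tendsto (fun z => ‖slope F x z‖) (nhdsWithin x (Set.Ioi x))
          (nhds ‖F' x‖) := by
        have := (hasDerivAt_iff_tendsto_slope.1 hFx).mono_left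
          (nhdsWithin_mono x (by intro z hz; exact ne_of_gt hz : Set.Ioi x ⊆ {x}ᶜ))
        exact this.norm
      have hlt : ∀ᶠ z in nhdsWithin x (Set.Ioi x), ‖slope F x z‖ < r := by
        have hnorm : ‖F' x‖ < r := by
          rw [hF'x, norm_neg]; exact lt_of_le_of_lt (hrate x) hrM
        exact htends.eventually (Filter.Tendsto.eventually_lt_const hnorm Filter.tendsto_id)
      have : ∀ᶠ z in nhdsWithin x (Set.Ioi x), (z - x)⁻¹ * (g z - g x) < r := by
        filter_upwards [hlt, self_mem_nhdsWithin] with z hz hzx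
        have hzx' : 0 < z - x := sub_pos.2 hzx
        have : (z - x)⁻¹ * (g z - g x) ≤ ‖slope F x z‖ := by
          rw [slope_def_module, norm_smul, norm_inv, Real.norm_of_nonneg hzx'.le]
          have : g z - g x ≤ ‖F z - F x‖ := by
            simpa [hg, h0] using norm_le_norm_add_norm_sub' (F z) (F x)
          exact mul_le_mul_of_nonneg_left (le_trans this (le_refl _)) (inv_nonneg.2 hzx'.le)
        exact lt_of_le_of_lt this hz
      exact this.frequently
    · -- here ‖F ·‖ is differentiable at x with derivative ⟪F' x, F x⟫ / ‖F x‖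
      have hFx0 : (0:ℝ) < ‖F x‖ := norm_pos_iff.2 h0
      have hsq : HasDerivAt (fun z => ‖F z‖ ^ 2) (2 * ⟪F x, F' x⟫) x := hFx.norm_sq
      have hsqrt : HasDerivAt (fun z => Real.sqrt (‖F z‖ ^ 2))
          ((2 * ⟪F x, F' x⟫) / (2 * Real.sqrt (‖F x‖ ^ 2))) x := by
        refine hsq.sqrt ?_
        positivity
      have heq : (fun z => Real.sqrt (‖F z‖ ^ 2)) = g := by
        funext z; simp [hg, Real.sqrt_sq (norm_nonneg _)]
      have hDval : (2 * ⟪F x, F' x⟫) / (2 * Real.sqrt (‖F x‖ ^ 2)) = D x := by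
        rw [Real.sqrt_sq (norm_nonneg _), hD]
        simp only [h0, if_false]
        rw [real_inner_comm]
        ring
      rw [heq, hDval] at hsqrt
      have htends : Filter.Tendsto (fun z => slope g x z) (nhdsWithin x (Set.Ioi x))
          (nhds (D x)) :=
        (hasDerivAt_iff_tendsto_slope.1 hsqrt).mono_left
          (nhdsWithin_mono x (by intro z hz; exact ne_of_gt hz : Set.Ioi x ⊆ {x}ᶜ))
      have hlt : ∀ᶠ z in nhdsWithin x (Set.Ioi x), slope g x z < r :=
        htends.eventually (Filter.Tendsto.eventually_lt_const hr Filter.tendsto_id)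
      refine hlt.frequently.mono ?_
      intro z hz
      rwa [slope_def_field, div_eq_inv_mul] at hz
  -- boundedness of the Dini derivative
  have hbound : ∀ x ∈ Set.Ico (0:ℝ) T, D x ≤ -(c * μ) * g x + M := by
    intro x hx
    by_cases h0 : F x = 0
    · simp [hD, h0, hg]
    · have hFx0 : (0:ℝ) < ‖F x‖ := norm_pos_iff.2 h0
      rw [hD]; simp only [h0, if_false]
      rw [div_le_iff₀ hFx0]
      have := hinner x
      calc ⟪F' x, F x⟫ ≤ -(c * μ) * ‖F x‖ ^ 2 + M * ‖F x‖ := this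
        _ = (-(c * μ) * g x + M) * ‖F x‖ := by rw [hg]; ring
  -- continuity of g on [0, T]
  have hgc : ContinuousOn g (Set.Icc 0 T) := by
    intro x hx
    exact ((hFd x hx.1).continuousAt.norm).continuousWithinAt
  -- Grönwall
  have := le_gronwallBound_of_liminf_deriv_right_le hgc hslope (le_refl (g 0)) hbound
    T ⟨hT, le_refl T⟩
  rw [gronwallBound_of_K_ne_0 (neg_ne_zero.2 (ne_of_gt hcμ))] at this
  simp only [sub_zero] at this
  have hexp : Real.exp (-(c * μ) * T) = Real.exp (-(c * μ * T)) := by ring_nf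
  calc ‖a T - astar T‖ = g T := rfl
    _ ≤ g 0 * Real.exp (-(c * μ) * T) + M / -(c * μ) * (Real.exp (-(c * μ) * T) - 1) := this
    _ ≤ Real.exp (-(c * μ * T)) * ‖a 0 - astar 0‖ + M / (c * μ) := by
        have h1 : Real.exp (-(c * μ) * T) = Real.exp (-(c * μ * T)) := by ring_nf
        rw [h1]
        have h2 : M / -(c * μ) * (Real.exp (-(c * μ * T)) - 1) =
            M / (c * μ) * (1 - Real.exp (-(c * μ * T))) := by
          field_simp; ring
        rw [h2]
        have h3 : g 0 * Real.exp (-(c * μ * T)) = Real.exp (-(c * μ * T)) * ‖a 0 - astar 0‖ := by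
          rw [hg]; exact mul_comm _ _
        rw [h3]
        have h4 : M / (c * μ) * (1 - Real.exp (-(c * μ * T))) ≤ M / (c * μ) := by
          have : 0 < Real.exp (-(c * μ * T)) := Real.exp_pos _
          have hMcμ : 0 < M / (c * μ) := div_pos hM hcμ
          nlinarith
        linarith
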